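/- arXiv:2310.19147 — 2 statements merged into one kernel-verified Lean document; each statement's English description precedes it below -/
import Mathlib

section
/- Let F : [0,1] → [0,1] be nondecreasing right-continuous with F(t) the probability of signal arrival by time t, and let u : [0,1] → ℝ be bounded measurable. Then the continuation value U(t) = ∫_t^{T} u(t') dF_t(t') + (1 − F_t(T))·u_T, where F_t(t') = (F(t') − F(t))/(1 − F(t)) and F(t) < 1 for t < T, is continuous in t at every continuity point of F and of u. -/
open MeasureTheory

theorem continuation_value_continuous (ν : Measure ℝ) [IsProbabilityMeasure ν]
    (u : ℝ → ℝ) (hu_meas : Measurable u) (hu_bdd : ∃ C, ∀ t, |u t| ≤ C)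
    (uT T : ℝ)
    (F : ℝ → ℝ) (hF : ∀ t, F t = (ν (Set.Iic t)).toReal)
    (U : ℝ → ℝ)
    (hU : ∀ t, U t =
      ((∫ t' in Set.Ioc t T, u t' ∂ν) + (1 - F T) * uT) / (1 - F t)) :
    ∀ t < T, F t < 1 → ContinuousAt F t → ContinuousAt u t → ContinuousAt U t := by
  intro t htT hFt hcF hcu
  obtain ⟨C, hC⟩ := hu_bdd
  set g : ℝ → ℝ := fun s => ∫ t' in Set.Ioc s T, u t' ∂ν with hg
  -- measure of Ioc in terms of F
  have hmeas : ∀ a b : ℝ, a ≤ b → (ν (Set.Ioc a b)).toReal = F b - F a := by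
    intro a b hab
    have h1 : Set.Ioc a b = Set.Iic b \ Set.Iic a := by ext x; simp [and_comm]
    have h2 : ν (Set.Ioc a b) = ν (Set.Iic b) - ν (Set.Iic a) := by
      rw [h1, measure_diff (Set.Iic_subset_Iic.mpr hab) measurableSet_Iic.nullMeasurableSet
        (measure_ne_top ν _)]
    rw [h2, ENNReal.toReal_sub_of_le (measure_mono (Set.Iic_subset_Iic.mpr hab))
      (measure_ne_top ν _), hF a, hF b]
  -- bound for the integral difference
  have hbound : ∀ a b : ℝ, a ≤ b → b ≤ T → |g a - g b| ≤ C * (F b - F a) := by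
    intro a b hab hbT
    have hsplit : Set.Ioc a b ∪ Set.Ioc b T = Set.Ioc a T := Set.Ioc_union_Ioc_eq_Ioc hab hbT
    have hint : ∀ s : Set ℝ, IntegrableOn u s ν := by
      intro s
      refine ⟨hu_meas.aestronglyMeasurable.restrict, ?_⟩
      exact MeasureTheory.HasFiniteIntegral.of_bounded
        (C := C) (Filter.Eventually.of_forall fun x => by simpa using hC x)
    have hdisj : Disjoint (Set.Ioc a b) (Set.Ioc b T) := Set.Ioc_disjoint_Ioc_of_le le_rfl
    have hsum : g a = (∫ t' in Set.Ioc a b, u t' ∂ν) + g b := by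
      rw [hg]
      simp only
      rw [← hsplit, setIntegral_union hdisj measurableSet_Ioc (hint _) (hint _)]
    have h3 : g a - g b = ∫ t' in Set.Ioc a b, u t' ∂ν := by rw [hsum]; ring
    rw [h3, ← hmeas a b hab]
    calc |∫ t' in Set.Ioc a b, u t' ∂ν| ≤ C * (ν (Set.Ioc a b)).toReal := by
          rw [← Real.norm_eq_abs]
          apply norm_setIntegral_le_of_norm_le_const (measure_lt_top ν _)
          intro x _; simpa using hC x
      _ = C * (ν (Set.Ioc a b)).toReal := rfl
  -- continuity of g at t
  have hgc : ContinuousAt g t := by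
    rw [ContinuousAt, tendsto_iff_dist_tendsto_zero]
    have hFlim : Filter.Tendsto (fun s => C * |F s - F t|) (nhds t) (nhds 0) := by
      have : Filter.Tendsto (fun s => F s - F t) (nhds t) (nhds 0) := by
        have h1 : Filter.Tendsto (fun s => F s - F t) (nhds t) (nhds (F t - F t)) :=
          Filter.Tendsto.sub hcF tendsto_const_nhds
        simpa using h1
      have := this.abs.const_mul C
      simpa using this
    apply squeeze_zero' (Filter.Eventually.of_forall fun s => dist_nonneg) _ hFlim
    have hsT : ∀ᶠ s in nhds t, s < T := Filter.Tendsto.eventually_lt_const htT Filter.tendsto_id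
    filter_upwards [hsT] with s hs
    rw [Real.dist_eq]
    rcases le_total s t with h | h
    · calc |g s - g t| ≤ C * (F t - F s) := hbound s t h (le_of_lt htT)
        _ ≤ C * |F s - F t| := by
            have h0 : (0:ℝ) ≤ C := le_trans (abs_nonneg _) (hC 0)
            have : F t - F s ≤ |F s - F t| := by
              rw [abs_sub_comm]; exact le_abs_self _
            exact mul_le_mul_of_nonneg_left this h0
    · calc |g s - g t| = |g t - g s| := abs_sub_comm _ _
        _ ≤ C * (F s - F t) := hbound t s h (le_of_lt hs)
        _ ≤ C * |F s - F t| := by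
            have h0 : (0:ℝ) ≤ C := le_trans (abs_nonneg _) (hC 0)
            exact mul_le_mul_of_nonneg_left (le_abs_self _) h0
  -- conclude
  have hUe : U = fun s => ((∫ t' in Set.Ioc s T, u t' ∂ν) + (1 - F T) * uT) / (1 - F s) :=
    funext hU
  rw [hUe]
  have hne : (1 : ℝ) - F t ≠ 0 := by linarith
  exact ((hgc.add continuousAt_const).div ((continuousAt_const.sub hcF)) hne)
end

section
/- Fix λ > 0, c > 0 with c < λ. For the solution V(p) = k(1−p) + (λ − c + c(1−p)log((1−p)/p))/λ of the HJB with r̄₁ = 1 and boundary condition V(c/λ) = 1 − c/λ (value-matching at the stopping belief), we have V'(c/λ) = −1. -/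
theorem smooth_pasting (lam c k : ℝ) (hlam : 0 < lam) (hc : 0 < c) (hclam : c < lam)
    (hk : k * (1 - c / lam) +
        (lam - c + c * (1 - c / lam) * Real.log ((1 - c / lam) / (c / lam))) / lam =
      1 - c / lam) :
    HasDerivAt (fun p : ℝ =>
        k * (1 - p) + (lam - c + c * (1 - p) * Real.log ((1 - p) / p)) / lam)
      (-1) (c / lam) := by
  set p0 : ℝ := c / lam with hp0
  have hlam' : lam ≠ 0 := ne_of_gt hlam
  have hp0pos : 0 < p0 := div_pos hc hlam
  have hp0lt : p0 < 1 := (div_lt_one hlam).mpr hclam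
  have h1p : 0 < 1 - p0 := by linarith
  have hq : 0 < (1 - p0) / p0 := div_pos h1p (by positivity)
  set L0 : ℝ := Real.log ((1 - p0) / p0) with hL0
  have hplam0 : p0 * lam = c := div_mul_cancel₀ c hlam'
  clear_value p0
  -- derivative of inner quotient
  have hinner : HasDerivAt (fun p : ℝ => (1 - p) / p) (-(1 / p0 ^ 2)) p0 := by
    have h := ((hasDerivAt_id p0).const_sub 1).div (hasDerivAt_id p0) (ne_of_gt hp0pos)
    refine h.congr_deriv ?_
    simp only [id]
    field_simp
    ring
  have hlog : HasDerivAt (fun p : ℝ => Real.log ((1 - p) / p))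
      (-(1 / (p0 * (1 - p0)))) p0 := by
    have h := hinner.log (ne_of_gt hq)
    refine h.congr_deriv ?_
    field_simp
  -- derivative of c * (1 - p) * log ...
  have hmul : HasDerivAt (fun p : ℝ => c * (1 - p) * Real.log ((1 - p) / p))
      (c * (-L0 - 1 / p0)) p0 := by
    have h := (((hasDerivAt_id p0).const_sub 1).const_mul c).mul hlog
    refine h.congr_deriv ?_
    simp only [id]
    field_simp
    ring
  have hfull : HasDerivAt (fun p : ℝ =>
      k * (1 - p) + (lam - c + c * (1 - p) * Real.log ((1 - p) / p)) / lam)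
      (-k + (0 + c * (-L0 - 1 / p0)) / lam) p0 := by
    have h1 : HasDerivAt (fun p : ℝ => k * (1 - p)) (-k) p0 := by
      have h := ((hasDerivAt_id p0).const_sub 1).const_mul k
      refine h.congr_deriv ?_
      ring
    exact h1.add (((hasDerivAt_const p0 (lam - c)).add hmul).div_const lam)
  have hkeq : k = -p0 * L0 := by
    have hplam : p0 * lam = c := hplam0
    have h2 : lam - c = (1 - p0) * lam := by rw [← hplam]; ring
    rw [h2] at hk
    field_simp at hk
    have hne : (1 - p0) * lam ≠ 0 := by positivity
    have hmc : k * ((1 - p0) * lam) = -p0 * L0 * ((1 - p0) * lam) := by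
      linear_combination (1 - p0) * hk + ((1 - p0) * L0) * hplam
    exact mul_right_cancel₀ hne hmc
  have hplam : p0 * lam = c := hplam0
  convert hfull using 1
  rw [hkeq]
  field_simp
  linear_combination (-(L0 * p0 + 1)) * hplam
end
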